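/- With X_s, Θ_s, ψ_j as in the weighted-Hilbert-space setup and g_j = b_jψ_j where b_j = 1 for odd j and b_j = j^r for even j (r ≥ 1 fixed), there do NOT exist constants A_s, B_s ∈ (0,∞) and indices n_s, s ∈ ℕ₀, such that A_s‖φ‖_{n_s} ≤ |||{g_j(φ)}|||_s ≤ B_s‖φ‖_{n_s} for all φ ∈ X_F. That is, {g_j} is not a strict pre-F-frame. -/

import Mathlib

/-- In the weighted-Hilbert-space setup with `b_j = 1` for `j+1` odd and
`b_j = (j+1)^r` for `j+1` even (`r ≥ 1`), and `g_j(φ) = b_j ⟨φ, ψ_j⟩`, there are NO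
constants `A_s, B_s > 0` and indices `n_s` with
`A_s‖φ‖_{n_s} ≤ |||{g_j(φ)}|||_s ≤ B_s‖φ‖_{n_s}` for all `φ ∈ X_F` and all `s`; that is,
`{g_j}` is not a strict pre-F-frame. -/
theorem statement15
    {H : Type*} [NormedAddCommGroup H] [InnerProductSpace ℝ H] [CompleteSpace H]
    (ψ : HilbertBasis ℕ ℝ H) (r : ℕ) (hr : 1 ≤ r)
    (b : ℕ → ℝ)
    (hb : ∀ j, b j = if (j + 1) % 2 = 1 then 1 else ((j : ℝ) + 1) ^ r) :
    ¬ ∃ (A B : ℕ → ℝ) (n : ℕ → ℕ),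
        (∀ s, 0 < A s) ∧ (∀ s, 0 < B s) ∧
        ∀ (s : ℕ) (φ : H),
          (∀ t : ℕ, Summable fun j => (ψ.repr φ j) ^ 2 * ((j : ℝ) + 1) ^ (2 * t)) →
          A s * Real.sqrt (∑' j, (ψ.repr φ j) ^ 2 * ((j : ℝ) + 1) ^ (2 * n s)) ≤
              Real.sqrt (∑' j, (b j * ψ.repr φ j) ^ 2 * ((j : ℝ) + 1) ^ (2 * s)) ∧
            Real.sqrt (∑' j, (b j * ψ.repr φ j) ^ 2 * ((j : ℝ) + 1) ^ (2 * s)) ≤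
              B s * Real.sqrt (∑' j, (ψ.repr φ j) ^ 2 * ((j : ℝ) + 1) ^ (2 * n s)) := by
  classical
  rintro ⟨A, B, n, hA, hB, h⟩
  -- b j is positive
  have hbpos : ∀ j, 0 < b j := by
    intro j
    rw [hb j]
    split_ifs
    · norm_num
    · positivity
  have hj1 : ∀ j : ℕ, (0:ℝ) ≤ (j:ℝ) + 1 := by intro j; positivity
  have hrepr : ∀ j i : ℕ, ψ.repr (ψ j) i = if i = j then (1:ℝ) else 0 := by
    intro j i
    rw [ψ.repr_self, lp.single_apply]
    split_ifs with hh
    · subst hh; simp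
    · simp [Pi.single_apply, hh]
  have key : ∀ (s j : ℕ),
      A s * ((j:ℝ)+1) ^ (n s) ≤ b j * ((j:ℝ)+1) ^ s ∧
      b j * ((j:ℝ)+1) ^ s ≤ B s * ((j:ℝ)+1) ^ (n s) := by
    intro s j
    have hfun : ∀ t : ℕ, (fun i : ℕ => (ψ.repr (ψ j) i) ^ 2 * ((i : ℝ) + 1) ^ (2 * t)) =
        fun i : ℕ => if i = j then ((j:ℝ)+1) ^ (2*t) else 0 := by
      intro t
      funext i
      rw [hrepr]
      split_ifs with hh
      · subst hh; ring
      · ring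
    have hsum : ∀ t : ℕ, Summable fun i : ℕ => (ψ.repr (ψ j) i) ^ 2 * ((i : ℝ) + 1) ^ (2 * t) := by
      intro t
      rw [hfun t]
      exact summable_of_ne_finset_zero (s := {j}) (by intro i hi; simp at hi; simp [hi])
    have htsum : ∀ t : ℕ,
        (∑' i, (ψ.repr (ψ j) i) ^ 2 * ((i : ℝ) + 1) ^ (2 * t)) = ((j:ℝ)+1) ^ (2*t) := by
      intro t
      rw [hfun t]
      exact tsum_ite_eq j _
    have hbfun : (fun i : ℕ => (b i * ψ.repr (ψ j) i) ^ 2 * ((i : ℝ) + 1) ^ (2 * s)) =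
        fun i : ℕ => if i = j then (b j * ((j:ℝ)+1) ^ s)^2 else 0 := by
      funext i
      rw [hrepr]
      split_ifs with hh
      · subst hh; ring
      · ring
    have hbtsum : (∑' i, (b i * ψ.repr (ψ j) i) ^ 2 * ((i : ℝ) + 1) ^ (2 * s))
        = (b j * ((j:ℝ)+1) ^ s)^2 := by
      rw [hbfun]
      exact tsum_ite_eq j _
    have hsq : ∀ t : ℕ, Real.sqrt (((j:ℝ)+1) ^ (2*t)) = ((j:ℝ)+1) ^ t := by
      intro t
      rw [show 2*t = t*2 from mul_comm 2 t, pow_mul, Real.sqrt_sq (pow_nonneg (hj1 j) t)]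
    obtain ⟨h1, h2⟩ := h s (ψ j) hsum
    rw [htsum, hbtsum, hsq,
      Real.sqrt_sq (le_of_lt (mul_pos (hbpos j) (by positivity)))] at h1 h2
    exact ⟨h1, h2⟩
  -- b on odd/even j
  have hbodd : ∀ m : ℕ, b (2*m) = 1 := by
    intro m
    rw [hb]
    have : (2*m+1) % 2 = 1 := by omega
    simp [this]
  have hbeven : ∀ m : ℕ, b (2*m+1) = (((2*m+1:ℕ):ℝ) + 1) ^ r := by
    intro m
    rw [hb]
    have : (2*m+1+1) % 2 = 0 := by omega
    simp [this]
  rcases Nat.eq_zero_or_pos (n 0) with h0 | h0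
  · -- n 0 = 0: even j+1 gives (j+1)^r ≤ B 0, contradiction for large j
    set m := ⌈B 0⌉₊ with hm
    have hk := (key 0 (2*m+1)).2
    rw [hbeven, h0] at hk
    simp only [pow_zero, mul_one] at hk
    have h2 : ((2*m+1:ℕ):ℝ) + 1 = 2*(m:ℝ)+2 := by push_cast; ring
    rw [h2] at hk
    have hge1 : (1:ℝ) ≤ 2*(m:ℝ)+2 := by nlinarith [Nat.cast_nonneg (α := ℝ) m]
    have hself : (2*(m:ℝ)+2) ≤ (2*(m:ℝ)+2) ^ r :=
      le_self_pow₀ hge1 (by omega)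
    have hBm : B 0 ≤ (m:ℝ) := Nat.le_ceil _
    have : 2*(m:ℝ)+2 ≤ B 0 := le_trans hself hk
    linarith
  · -- n 0 ≥ 1: odd j+1 gives A 0 * (j+1)^(n 0) ≤ 1, contradiction for large j
    set m := ⌈1 / A 0⌉₊ with hm
    have hk := (key 0 (2*m)).1
    rw [hbodd] at hk
    simp only [pow_zero, mul_one, one_mul] at hk
    have h2 : ((2*m:ℕ):ℝ) + 1 = 2*(m:ℝ)+1 := by push_cast; ring
    rw [h2] at hk
    have hge1 : (1:ℝ) ≤ 2*(m:ℝ)+1 := by nlinarith [Nat.cast_nonneg (α := ℝ) m]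
    have hself : (2*(m:ℝ)+1) ≤ (2*(m:ℝ)+1) ^ (n 0) :=
      le_self_pow₀ hge1 (by omega)
    have hAm : 1 / A 0 ≤ (m:ℝ) := Nat.le_ceil _
    have hA0 := hA 0
    have : A 0 * (2*(m:ℝ)+1) ≤ 1 :=
      le_trans (by nlinarith [hA0]) hk
    rw [div_le_iff₀ hA0] at hAm
    nlinarith
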